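/- Let c>0, Δ>0, D={(x,y): x²+y²<c²Δ²}, u(x,y)=c²Δ²−x²−y², and for μ>0 let p_μ(x,y) = (μ/(2πc)) e^{−μΔ+(μ/c)√(u(x,y))}/√(u(x,y)), and I(μ) = (1/μ²)(1 − e^{−μΔ}(1+μ²Δ²)). Then for all 0<λ≤λ′, ∬_D (√(p_{λ′}(x,y)) − √(p_λ(x,y)))² dx dy ≤ (λ′−λ)² · (1/4) ∫₀¹ I(λ + s(λ′−λ)) ds. -/

import Mathlib

open MeasureTheory Real

/-- The absolutely continuous density of a planar random flight at time step `Δ`,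
speed `c` and Poisson rate `μ`, evaluated at the point `q` of the open disc of
radius `cΔ`. -/
noncomputable def prfDensity (c Δ μ : ℝ) (q : ℝ × ℝ) : ℝ :=
  μ / (2 * π * c) *
    Real.exp (-μ * Δ + μ / c * Real.sqrt (c ^ 2 * Δ ^ 2 - q.1 ^ 2 - q.2 ^ 2)) /
      Real.sqrt (c ^ 2 * Δ ^ 2 - q.1 ^ 2 - q.2 ^ 2)

/-- Single-observation Fisher information of the planar random flight experiment. -/
noncomputable def prfFisher (Δ μ : ℝ) : ℝ :=
  1 / μ ^ 2 * (1 - Real.exp (-μ * Δ) * (1 + μ ^ 2 * Δ ^ 2))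

open Set

noncomputable def prfG (c Δ μ : ℝ) (q : ℝ × ℝ) : ℝ :=
  Real.sqrt (prfDensity c Δ μ q) *
    (1 / (2 * μ) + (Real.sqrt (c ^ 2 * Δ ^ 2 - q.1 ^ 2 - q.2 ^ 2) / c - Δ) / 2)

lemma sqrtDensity_eq {c Δ m : ℝ} (hc : 0 < c) (q : ℝ × ℝ)
    (hu : 0 < c ^ 2 * Δ ^ 2 - q.1 ^ 2 - q.2 ^ 2) (hm : 0 < m) :
    Real.sqrt (prfDensity c Δ m q) =
      Real.sqrt (1 / (2 * π * c * Real.sqrt (c ^ 2 * Δ ^ 2 - q.1 ^ 2 - q.2 ^ 2))) *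
        (Real.sqrt m *
          Real.exp (m * (Real.sqrt (c ^ 2 * Δ ^ 2 - q.1 ^ 2 - q.2 ^ 2) / c - Δ) / 2)) := by
  set a := Real.sqrt (c ^ 2 * Δ ^ 2 - q.1 ^ 2 - q.2 ^ 2) with ha_def
  have ha : 0 < a := Real.sqrt_pos.2 hu
  have hπ : (0:ℝ) < π := Real.pi_pos
  have h1 : prfDensity c Δ m q =
      1 / (2 * π * c * a) * (m * Real.exp (m * (a / c - Δ))) := by
    rw [prfDensity]
    have : -m * Δ + m / c * a = m * (a / c - Δ) := by field_simp; ring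
    rw [this]
    field_simp
    exact ha_def
  rw [h1, Real.sqrt_mul (by positivity), Real.sqrt_mul hm.le, ← Real.exp_half]

lemma hasDerivAt_sqrtDensity {c Δ m : ℝ} (hc : 0 < c) (q : ℝ × ℝ)
    (hu : 0 < c ^ 2 * Δ ^ 2 - q.1 ^ 2 - q.2 ^ 2) (hm : 0 < m) :
    HasDerivAt (fun x => Real.sqrt (prfDensity c Δ x q)) (prfG c Δ m q) m := by
  set a := Real.sqrt (c ^ 2 * Δ ^ 2 - q.1 ^ 2 - q.2 ^ 2) with ha_def
  have ha : 0 < a := Real.sqrt_pos.2 hu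
  set k := Real.sqrt (1 / (2 * π * c * a)) with hk_def
  set b := a / c - Δ with hb_def
  have hsm : Real.sqrt m ≠ 0 := by positivity
  have hmsq : Real.sqrt m * Real.sqrt m = m := Real.mul_self_sqrt hm.le
  have h2 : HasDerivAt (fun x : ℝ => k * (Real.sqrt x * Real.exp (x * b / 2)))
      (k * (1 / (2 * Real.sqrt m) * Real.exp (m * b / 2)
        + Real.sqrt m * (Real.exp (m * b / 2) * (b / 2)))) m := by
    have hs : HasDerivAt Real.sqrt (1 / (2 * Real.sqrt m)) m := Real.hasDerivAt_sqrt hm.ne'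
    have he : HasDerivAt (fun x : ℝ => Real.exp (x * b / 2)) (Real.exp (m * b / 2) * (b / 2)) m := by
      simpa using (((hasDerivAt_id m).mul_const b).div_const 2).exp
    exact (hs.mul he).const_mul k
  have heq : (fun x => Real.sqrt (prfDensity c Δ x q)) =ᶠ[nhds m]
      (fun x : ℝ => k * (Real.sqrt x * Real.exp (x * b / 2))) := by
    filter_upwards [eventually_gt_nhds hm] with x hx
    exact sqrtDensity_eq hc q hu hx
  rw [show prfG c Δ m q = k * (Real.sqrt m * Real.exp (m * b / 2)) * (1 / (2 * m) + b / 2) by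
    rw [prfG, sqrtDensity_eq hc q hu hm]]
  refine HasDerivAt.congr_of_eventuallyEq ?_ heq
  refine h2.congr_deriv ?_
  symm
  have h3 : 1 / (2 * m) * Real.sqrt m = 1 / (2 * Real.sqrt m) := by
    rw [eq_div_iff (by positivity)]
    field_simp
    nlinarith [hmsq]
  field_simp
  linear_combination k * hmsq
open MeasureTheory Real Set
section
variable {ν : Measure ℝ}

lemma sq_integral_le [IsProbabilityMeasure ν] {h : ℝ → ℝ} (h1 : Integrable h ν)
    (h2 : Integrable (fun x => h x ^ 2) ν) :
    (∫ x, h x ∂ν) ^ 2 ≤ ∫ x, h x ^ 2 ∂ν := by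
  set m := ∫ x, h x ∂ν with hm
  have h0 : 0 ≤ ∫ x, (h x - m) ^ 2 ∂ν := integral_nonneg fun x => sq_nonneg _
  have hexp : ∫ x, (h x - m) ^ 2 ∂ν = (∫ x, h x ^ 2 ∂ν) - 2 * m * m + m ^ 2 := by
    have he : ∀ x, (h x - m) ^ 2 = h x ^ 2 - 2 * m * h x + m ^ 2 := fun x => by ring
    simp_rw [he]
    have ha : Integrable (fun x => h x ^ 2 - 2 * m * h x) ν := h2.sub (h1.const_mul (2 * m))
    have hb : Integrable (fun x => 2 * m * h x) ν := h1.const_mul (2 * m)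
    rw [integral_add ha (integrable_const _), integral_sub h2 hb, integral_const_mul,
      integral_const]
    simp [hm]
  nlinarith [h0, hexp]
end

lemma continuous_prfDensity_in_mu {c Δ : ℝ} (q : ℝ × ℝ) :
    Continuous (fun m : ℝ => prfDensity c Δ m q) := by
  unfold prfDensity
  fun_prop

lemma continuousOn_prfG {c Δ lam d : ℝ} (q : ℝ × ℝ) (hpos : ∀ s ∈ uIcc (0:ℝ) 1, 0 < lam + s * d) :
    ContinuousOn (fun s : ℝ => prfG c Δ (lam + s * d) q) (uIcc 0 1) := by
  have hJ : Continuous (fun s : ℝ => lam + s * d) := by fun_prop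
  unfold prfG
  refine ContinuousOn.mul ?_ ?_
  · exact (Real.continuous_sqrt.comp ((continuous_prfDensity_in_mu q).comp hJ)).continuousOn
  · refine ContinuousOn.add ?_ continuousOn_const
    exact continuousOn_const.div (continuous_const.mul hJ).continuousOn
      (fun s hs => by have := hpos s hs; positivity)

lemma pointwise_bound {c Δ lam lam' : ℝ} (hc : 0 < c) (hlam : 0 < lam) (hle : lam ≤ lam')
    (q : ℝ × ℝ) (hu : 0 < c ^ 2 * Δ ^ 2 - q.1 ^ 2 - q.2 ^ 2) :
    (Real.sqrt (prfDensity c Δ lam' q) - Real.sqrt (prfDensity c Δ lam q)) ^ 2 ≤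
      (lam' - lam) ^ 2 * ∫ s in (0:ℝ)..1, (prfG c Δ (lam + s * (lam' - lam)) q) ^ 2 := by
  set d := lam' - lam with hd_def
  have hd : 0 ≤ d := sub_nonneg.2 hle
  have hpos : ∀ s ∈ uIcc (0:ℝ) 1, 0 < lam + s * d := by
    intro s hs
    rw [uIcc_of_le zero_le_one] at hs
    nlinarith [hs.1]
  have hder : ∀ s ∈ uIcc (0:ℝ) 1,
      HasDerivAt (fun s : ℝ => Real.sqrt (prfDensity c Δ (lam + s * d) q))
        (d * prfG c Δ (lam + s * d) q) s := by
    intro s hs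
    have h1 : HasDerivAt (fun m => Real.sqrt (prfDensity c Δ m q))
        (prfG c Δ (lam + s * d) q) (lam + s * d) :=
      hasDerivAt_sqrtDensity hc q hu (hpos s hs)
    have h2 : HasDerivAt (fun s : ℝ => lam + s * d) d s := by
      simpa using ((hasDerivAt_id s).mul_const d).const_add lam
    have h3 := h1.comp s h2
    rw [mul_comm] at h3
    exact h3
  have hcont : ContinuousOn (fun s : ℝ => prfG c Δ (lam + s * d) q) (uIcc 0 1) :=
    continuousOn_prfG q hpos
  have hcont' : ContinuousOn (fun s : ℝ => d * prfG c Δ (lam + s * d) q) (uIcc 0 1) :=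
    continuousOn_const.mul hcont
  have hftc : ∫ s in (0:ℝ)..1, d * prfG c Δ (lam + s * d) q =
      Real.sqrt (prfDensity c Δ lam' q) - Real.sqrt (prfDensity c Δ lam q) := by
    rw [intervalIntegral.integral_eq_sub_of_hasDerivAt hder hcont'.intervalIntegrable]
    norm_num [hd_def]
  have hprob : IsProbabilityMeasure (volume.restrict (Ioc (0:ℝ) 1)) := by
    constructor
    rw [Measure.restrict_apply_univ]
    simp
  have hIcc : uIcc (0:ℝ) 1 = Icc 0 1 := uIcc_of_le zero_le_one
  have hInt1 : Integrable (fun s : ℝ => d * prfG c Δ (lam + s * d) q)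
      (volume.restrict (Ioc 0 1)) := by
    apply IntegrableOn.mono_set _ Ioc_subset_Icc_self
    exact (hcont'.mono (by rw [hIcc])).integrableOn_Icc
  have hInt2 : Integrable (fun s : ℝ => (d * prfG c Δ (lam + s * d) q) ^ 2)
      (volume.restrict (Ioc 0 1)) := by
    apply IntegrableOn.mono_set _ Ioc_subset_Icc_self
    exact (((hcont'.mono (by rw [hIcc]))).pow 2).integrableOn_Icc
  have hcs := sq_integral_le hInt1 hInt2
  rw [← hftc]
  rw [intervalIntegral.integral_of_le zero_le_one]
  calc (∫ s in Ioc (0:ℝ) 1, d * prfG c Δ (lam + s * d) q) ^ 2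
      ≤ ∫ s in Ioc (0:ℝ) 1, (d * prfG c Δ (lam + s * d) q) ^ 2 := hcs
    _ = d ^ 2 * ∫ s in (0:ℝ)..1, (prfG c Δ (lam + s * d) q) ^ 2 := by
        rw [intervalIntegral.integral_of_le zero_le_one, ← integral_const_mul]
        congr 1; ext s; ring

noncomputable def radG (c Δ μ r : ℝ) : ℝ :=
  μ / (2 * π * c) * Real.exp (μ * (Real.sqrt (c ^ 2 * Δ ^ 2 - r ^ 2) / c - Δ)) /
      Real.sqrt (c ^ 2 * Δ ^ 2 - r ^ 2) *
    (1 / (2 * μ) + (Real.sqrt (c ^ 2 * Δ ^ 2 - r ^ 2) / c - Δ) / 2) ^ 2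

noncomputable def radA (c Δ μ r : ℝ) : ℝ :=
  -(1 / (8 * π)) * Real.exp (μ * (Real.sqrt (c ^ 2 * Δ ^ 2 - r ^ 2) / c - Δ)) *
    ((Δ - Real.sqrt (c ^ 2 * Δ ^ 2 - r ^ 2) / c) ^ 2 + 1 / μ ^ 2)

lemma hasDerivAt_radA {c Δ μ r : ℝ} (hc : 0 < c) (hμ : 0 < μ)
    (hur : 0 < c ^ 2 * Δ ^ 2 - r ^ 2) :
    HasDerivAt (radA c Δ μ) (r * radG c Δ μ r) r := by
  have hw : 0 < Real.sqrt (c ^ 2 * Δ ^ 2 - r ^ 2) := Real.sqrt_pos.2 hur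
  set w := Real.sqrt (c ^ 2 * Δ ^ 2 - r ^ 2) with hw_def
  have hw1 : HasDerivAt (fun r : ℝ => c ^ 2 * Δ ^ 2 - r ^ 2) (-(2 * r)) r := by
    simpa using (hasDerivAt_pow 2 r).const_sub (c ^ 2 * Δ ^ 2)
  have hw2 : HasDerivAt (fun r : ℝ => Real.sqrt (c ^ 2 * Δ ^ 2 - r ^ 2))
      (-(2 * r) / (2 * w)) r := hw1.sqrt hur.ne'
  have hE : HasDerivAt
      (fun r : ℝ => Real.exp (μ * (Real.sqrt (c ^ 2 * Δ ^ 2 - r ^ 2) / c - Δ)))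
      (Real.exp (μ * (w / c - Δ)) * (μ * (-(2 * r) / (2 * w) / c))) r :=
    (((hw2.div_const c).sub_const Δ).const_mul μ).exp
  have hP : HasDerivAt
      (fun r : ℝ => (Δ - Real.sqrt (c ^ 2 * Δ ^ 2 - r ^ 2) / c) ^ 2 + 1 / μ ^ 2)
      ((2 : ℕ) * (Δ - w / c) ^ 1 * -(-(2 * r) / (2 * w) / c)) r :=
    (((hw2.div_const c).const_sub Δ).pow 2).add_const (1 / μ ^ 2)
  have hA' := (hE.mul hP).const_mul (-(1 / (8 * π)))
  have hfe : radA c Δ μ = (fun y : ℝ =>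
      -(1 / (8 * π)) * (Real.exp (μ * (Real.sqrt (c ^ 2 * Δ ^ 2 - y ^ 2) / c - Δ)) *
        ((Δ - Real.sqrt (c ^ 2 * Δ ^ 2 - y ^ 2) / c) ^ 2 + 1 / μ ^ 2))) := by
    funext y; unfold radA; ring
  rw [hfe]
  refine hA'.congr_deriv ?_
  symm
  unfold radG
  rw [← hw_def]
  have hπ := Real.pi_pos
  field_simp
  ring

lemma radG_nonneg {c Δ μ : ℝ} (hc : 0 < c) (hμ : 0 < μ) (r : ℝ) : 0 ≤ radG c Δ μ r := by
  unfold radG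
  positivity

lemma continuous_radA {c Δ μ : ℝ} : Continuous (radA c Δ μ) := by
  unfold radA
  fun_prop

lemma radial_value {c Δ μ : ℝ} (hc : 0 < c) (hΔ : 0 < Δ) (hμ : 0 < μ) :
    (∫ r in (0:ℝ)..(c * Δ), r * radG c Δ μ r) = 1 / (8 * π) * prfFisher Δ μ ∧
      IntegrableOn (fun r => r * radG c Δ μ r) (Ioc 0 (c * Δ)) := by
  have hR : 0 < c * Δ := mul_pos hc hΔ
  have hderiv : ∀ r ∈ Ioo (0:ℝ) (c * Δ), HasDerivAt (radA c Δ μ) (r * radG c Δ μ r) r := by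
    intro r hr
    exact hasDerivAt_radA hc hμ (by nlinarith [hr.1, hr.2])
  have hpos : ∀ r ∈ Ioo (0:ℝ) (c * Δ), 0 ≤ r * radG c Δ μ r := fun r hr =>
    mul_nonneg hr.1.le (radG_nonneg hc hμ r)
  have hcont : ContinuousOn (radA c Δ μ) (Icc 0 (c * Δ)) := continuous_radA.continuousOn
  have hint : IntegrableOn (fun r => r * radG c Δ μ r) (Ioc 0 (c * Δ)) :=
    intervalIntegral.integrableOn_deriv_of_nonneg hcont hderiv hpos
  refine ⟨?_, hint⟩
  rw [intervalIntegral.integral_eq_sub_of_hasDeriv_right_of_le hR.le hcont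
    (fun x hx => (hderiv x hx).hasDerivWithinAt)
    (by rw [intervalIntegrable_iff, uIoc_of_le hR.le]; exact hint)]
  unfold radA prfFisher
  rw [show c ^ 2 * Δ ^ 2 - (c * Δ) ^ 2 = (0:ℝ) by ring, Real.sqrt_zero,
    show c ^ 2 * Δ ^ 2 - (0:ℝ) ^ 2 = (c * Δ) ^ 2 by ring, Real.sqrt_sq hR.le,
    show (0:ℝ) / c = 0 by simp, show c * Δ / c = Δ by field_simp,
    show μ * ((0:ℝ) - Δ) = -μ * Δ by ring, show μ * (Δ - Δ) = (0:ℝ) by ring, Real.exp_zero]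
  have hπ := Real.pi_pos
  field_simp
  ring

lemma integrable_polarCoord_symm_iff (f : ℝ × ℝ → ℝ) :
    Integrable f ↔
      IntegrableOn (fun p : ℝ × ℝ => p.1 • f (polarCoord.symm p)) polarCoord.target := by
  set B : ℝ × ℝ → ℝ × ℝ →L[ℝ] ℝ × ℝ := fun p =>
    LinearMap.toContinuousLinearMap (Matrix.toLin (Module.Basis.finTwoProd ℝ) (Module.Basis.finTwoProd ℝ)
      !![Real.cos p.2, -p.1 * Real.sin p.2; Real.sin p.2, p.1 * Real.cos p.2]) with hB_def
  have hB : ∀ p ∈ polarCoord.target,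
      HasFDerivWithinAt polarCoord.symm (B p) polarCoord.target p :=
    fun p _ => (hasFDerivAt_polarCoord_symm p).hasFDerivWithinAt
  have B_det : ∀ p, (B p).det = p.1 := by
    intro p
    conv_rhs => rw [← one_mul p.1, ← Real.cos_sq_add_sin_sq p.2]
    simp only [hB_def, neg_mul, LinearMap.det_toContinuousLinearMap, LinearMap.det_toLin,
      Matrix.det_fin_two_of, sub_neg_eq_add]
    ring
  have h1 : Integrable f ↔ IntegrableOn f polarCoord.source := by
    rw [IntegrableOn, Measure.restrict_congr_set polarCoord_source_ae_eq_univ,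
      Measure.restrict_univ]
  rw [h1, ← polarCoord.symm_image_target_eq_source,
    integrableOn_image_iff_integrableOn_abs_det_fderiv_smul volume
      polarCoord.open_target.measurableSet hB polarCoord.symm.injOn f]
  refine integrableOn_congr_fun (fun p hp => ?_) polarCoord.open_target.measurableSet
  rw [B_det, abs_of_pos hp.1]

lemma fisher_main {c Δ μ : ℝ} (hc : 0 < c) (hΔ : 0 < Δ) (hμ : 0 < μ) :
    IntegrableOn (fun q => (prfG c Δ μ q) ^ 2)
        {q : ℝ × ℝ | q.1 ^ 2 + q.2 ^ 2 < c ^ 2 * Δ ^ 2} ∧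
      (∫ q in {q : ℝ × ℝ | q.1 ^ 2 + q.2 ^ 2 < c ^ 2 * Δ ^ 2}, (prfG c Δ μ q) ^ 2) =
        1 / 4 * prfFisher Δ μ := by
  have hR : 0 < c * Δ := mul_pos hc hΔ
  have hπ := Real.pi_pos
  set D : Set (ℝ × ℝ) := {q : ℝ × ℝ | q.1 ^ 2 + q.2 ^ 2 < c ^ 2 * Δ ^ 2} with hD_def
  have hD : MeasurableSet D := by
    apply measurableSet_lt _ measurable_const
    fun_prop
  set f : ℝ × ℝ → ℝ := D.indicator (fun q => (prfG c Δ μ q) ^ 2) with hf_def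
  set F1 : ℝ → ℝ := (Ioo (0:ℝ) (c * Δ)).indicator (fun r => r * radG c Δ μ r) with hF1_def
  set F2 : ℝ → ℝ := fun _ => (1:ℝ) with hF2_def
  have hkey : ∀ p ∈ polarCoord.target,
      p.1 • f (polarCoord.symm p) = F1 p.1 * F2 p.2 := by
    rintro ⟨r, θ⟩ hp
    simp only [hF1_def, hF2_def]
    have hr : 0 < r := hp.1
    have key2 : (r * Real.cos θ) ^ 2 + (r * Real.sin θ) ^ 2 = r ^ 2 := by
      rw [mul_pow, mul_pow, ← mul_add, Real.cos_sq_add_sin_sq, mul_one]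
    have hsymm : polarCoord.symm (r, θ) = (r * Real.cos θ, r * Real.sin θ) := rfl
    by_cases hmem : r < c * Δ
    · have hin : polarCoord.symm (r, θ) ∈ D := by
        rw [hsymm, hD_def]
        simp only [mem_setOf_eq]
        rw [key2]
        nlinarith
      have hu0 : 0 < c ^ 2 * Δ ^ 2 - r ^ 2 := by nlinarith
      rw [hf_def, indicator_of_mem hin, indicator_of_mem (mem_Ioo.mpr ⟨hr, hmem⟩),
        mul_one]
      have hu' : c ^ 2 * Δ ^ 2 - (r * Real.cos θ) ^ 2 - (r * Real.sin θ) ^ 2 =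
          c ^ 2 * Δ ^ 2 - r ^ 2 := by rw [sub_sub, key2]
      rw [hsymm]
      unfold prfG prfDensity radG
      simp only [hu']
      have hdens : (0:ℝ) ≤ μ / (2 * π * c) *
          Real.exp (-μ * Δ + μ / c * Real.sqrt (c ^ 2 * Δ ^ 2 - r ^ 2)) /
            Real.sqrt (c ^ 2 * Δ ^ 2 - r ^ 2) := by positivity
      rw [mul_pow, Real.sq_sqrt hdens, smul_eq_mul]
      rw [show -μ * Δ + μ / c * Real.sqrt (c ^ 2 * Δ ^ 2 - r ^ 2) =
        μ * (Real.sqrt (c ^ 2 * Δ ^ 2 - r ^ 2) / c - Δ) by field_simp; ring]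
    · have hnotin : polarCoord.symm (r, θ) ∉ D := by
        rw [hsymm, hD_def]
        simp only [mem_setOf_eq, not_lt]
        rw [key2]
        nlinarith
      rw [hf_def, indicator_of_notMem hnotin,
        indicator_of_notMem (by simp [hmem] : r ∉ Ioo (0:ℝ) (c * Δ))]
      simp
  have hfact2 : (∫ θ in Ioo (-π) π, F2 θ) = 2 * π := by
    rw [hF2_def]
    rw [setIntegral_const, Real.volume_real_Ioo_of_le (by linarith), smul_eq_mul, mul_one]
    ring
  have hfact1 : (∫ r in Ioi (0:ℝ), F1 r) = ∫ r in (0:ℝ)..(c * Δ), r * radG c Δ μ r := by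
    rw [hF1_def, integral_indicator measurableSet_Ioo, Measure.restrict_restrict measurableSet_Ioo,
      inter_eq_self_of_subset_left Ioo_subset_Ioi_self,
      intervalIntegral.integral_of_le hR.le, integral_Ioc_eq_integral_Ioo]
  have hprodval : (∫ p in polarCoord.target, F1 p.1 * F2 p.2) =
      (∫ r in Ioi (0:ℝ), F1 r) * (∫ θ in Ioo (-π) π, F2 θ) := by
    rw [polarCoord_target, Measure.volume_eq_prod, ← Measure.prod_restrict]
    exact integral_prod_mul F1 F2
  have hradial := radial_value hc hΔ hμ
  constructor
  · have h1 : Integrable F1 (volume.restrict (Ioi (0:ℝ))) := by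
      rw [hF1_def, integrable_indicator_iff measurableSet_Ioo, IntegrableOn,
        Measure.restrict_restrict measurableSet_Ioo,
        inter_eq_self_of_subset_left Ioo_subset_Ioi_self]
      exact (hradial.2.mono_set Ioo_subset_Ioc_self)
    have h2 : Integrable F2 (volume.restrict (Ioo (-π) π)) := by
      rw [hF2_def]
      refine integrableOn_const ?_
      rw [Real.volume_Ioo]
      exact ENNReal.ofReal_lt_top.ne
    have hprodint : IntegrableOn (fun p : ℝ × ℝ => F1 p.1 * F2 p.2) polarCoord.target := by
      rw [IntegrableOn, polarCoord_target, Measure.volume_eq_prod, ← Measure.prod_restrict]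
      exact h1.mul_prod h2
    have hfint : Integrable f := by
      rw [integrable_polarCoord_symm_iff]
      exact hprodint.congr_fun (fun p hp => (hkey p hp).symm)
        polarCoord.open_target.measurableSet
    exact (integrable_indicator_iff hD).mp hfint
  · calc (∫ q in D, (prfG c Δ μ q) ^ 2) = ∫ q, f q := (integral_indicator hD).symm
      _ = ∫ p in polarCoord.target, p.1 • f (polarCoord.symm p) :=
          (integral_comp_polarCoord_symm f).symm
      _ = ∫ p in polarCoord.target, F1 p.1 * F2 p.2 :=
          setIntegral_congr_fun polarCoord.open_target.measurableSet hkey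
      _ = (1 / (8 * π) * prfFisher Δ μ) * (2 * π) := by
          rw [hprodval, hfact2, hfact1, hradial.1]
      _ = 1 / 4 * prfFisher Δ μ := by field_simp; ring


set_option maxHeartbeats 1000000 in
/-- Hellinger–Lipschitz bound (Lemma 4.1(i), single experiment):
`∬_D (√p_{λ'} − √p_λ)² ≤ (λ'−λ)² (1/4) ∫₀¹ I(λ + s(λ'−λ)) ds`. -/
theorem hellinger_lipschitz_bound (c Δ lam lam' : ℝ)
    (hc : 0 < c) (hΔ : 0 < Δ) (hlam : 0 < lam) (hle : lam ≤ lam') :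
    (∫ q in {q : ℝ × ℝ | q.1 ^ 2 + q.2 ^ 2 < c ^ 2 * Δ ^ 2},
        (Real.sqrt (prfDensity c Δ lam' q) - Real.sqrt (prfDensity c Δ lam q)) ^ 2)
      ≤ (lam' - lam) ^ 2 * (1 / 4) *
          ∫ s in (0:ℝ)..1, prfFisher Δ (lam + s * (lam' - lam)) := by
  set d := lam' - lam with hd_def
  have hd : 0 ≤ d := sub_nonneg.2 hle
  set D : Set (ℝ × ℝ) := {q : ℝ × ℝ | q.1 ^ 2 + q.2 ^ 2 < c ^ 2 * Δ ^ 2} with hD_def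
  have hD : MeasurableSet D := by
    apply measurableSet_lt _ measurable_const
    fun_prop
  have hJ : ∀ s ∈ Ioc (0:ℝ) 1, 0 < lam + s * d := by
    intro s hs
    nlinarith [hs.1, hs.2, hd]
  have hJc : Continuous (fun s : ℝ => lam + s * d) := by fun_prop
  -- joint measurability
  have hmeas : Measurable (Function.uncurry
      (fun (q : ℝ × ℝ) (s : ℝ) => (prfG c Δ (lam + s * d) q) ^ 2)) := by
    unfold Function.uncurry prfG prfDensity
    fun_prop
  -- integrability of the Fisher information along the path
  have hFisherInt : IntegrableOn (fun s : ℝ => 1 / 4 * prfFisher Δ (lam + s * d)) (Ioc 0 1) := by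
    apply IntegrableOn.mono_set _ Ioc_subset_Icc_self
    apply ContinuousOn.integrableOn_Icc
    unfold prfFisher
    refine continuousOn_const.mul (ContinuousOn.mul ?_ ?_)
    · refine continuousOn_const.div ((hJc.pow 2).continuousOn) (fun s hs => ?_)
      have : 0 < lam + s * d := by nlinarith [hs.1, hs.2, hd]
      positivity
    · apply Continuous.continuousOn
      fun_prop
  -- integrability on the product
  have hint : Integrable (Function.uncurry
      (fun (q : ℝ × ℝ) (s : ℝ) => (prfG c Δ (lam + s * d) q) ^ 2))
      ((volume.restrict D).prod (volume.restrict (Ioc 0 1))) := by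
    rw [integrable_prod_iff' hmeas.aestronglyMeasurable]
    constructor
    · rw [ae_restrict_iff' measurableSet_Ioc]
      exact ae_of_all _ (fun s hs => (fisher_main hc hΔ (hJ s hs)).1)
    · apply Integrable.congr hFisherInt
      rw [Filter.EventuallyEq, ae_restrict_iff' measurableSet_Ioc]
      refine ae_of_all _ (fun s hs => ?_)
      have hnorm : ∀ q : ℝ × ℝ, ‖(prfG c Δ (lam + s * d) q) ^ 2‖ =
          (prfG c Δ (lam + s * d) q) ^ 2 := fun q => by
        rw [Real.norm_eq_abs, abs_pow, sq_abs]
      simp only [Function.uncurry]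
      rw [show (∫ q in D, ‖(prfG c Δ (lam + s * d) q) ^ 2‖) =
        ∫ q in D, (prfG c Δ (lam + s * d) q) ^ 2 from
          integral_congr_ae (ae_of_all _ fun q => hnorm q)]
      exact ((fisher_main hc hΔ (hJ s hs)).2).symm
  have hswap := integral_integral_swap hint
  have hPhiInt : Integrable (fun q : ℝ × ℝ =>
      ∫ s in Ioc (0:ℝ) 1, (prfG c Δ (lam + s * d) q) ^ 2) (volume.restrict D) :=
    hint.integral_prod_left
  have hΦnonneg : ∀ q : ℝ × ℝ, 0 ≤ ∫ s in Ioc (0:ℝ) 1, (prfG c Δ (lam + s * d) q) ^ 2 :=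
    fun q => integral_nonneg fun s => sq_nonneg _
  have hmeas2 : AEStronglyMeasurable
      (fun q : ℝ × ℝ => (Real.sqrt (prfDensity c Δ lam' q) -
        Real.sqrt (prfDensity c Δ lam q)) ^ 2) (volume.restrict D) := by
    apply Measurable.aestronglyMeasurable
    unfold prfDensity
    fun_prop
  have hfint : IntegrableOn (fun q : ℝ × ℝ => (Real.sqrt (prfDensity c Δ lam' q) -
      Real.sqrt (prfDensity c Δ lam q)) ^ 2) D := by
    apply Integrable.mono (hPhiInt.const_mul (d ^ 2)) hmeas2
    rw [ae_restrict_iff' hD]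
    refine ae_of_all _ (fun q hq => ?_)
    have hu : 0 < c ^ 2 * Δ ^ 2 - q.1 ^ 2 - q.2 ^ 2 := by
      have := hq
      rw [hD_def, mem_setOf_eq] at this
      linarith
    have hb := pointwise_bound hc hlam hle q hu
    rw [intervalIntegral.integral_of_le zero_le_one] at hb
    rw [Real.norm_eq_abs, Real.norm_eq_abs, abs_of_nonneg (sq_nonneg _),
      abs_of_nonneg (mul_nonneg (sq_nonneg d) (hΦnonneg q))]
    exact hb
  calc (∫ q in D, (Real.sqrt (prfDensity c Δ lam' q) -
        Real.sqrt (prfDensity c Δ lam q)) ^ 2)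
      ≤ ∫ q in D, d ^ 2 * ∫ s in Ioc (0:ℝ) 1, (prfG c Δ (lam + s * d) q) ^ 2 := by
        refine setIntegral_mono_on hfint (hPhiInt.const_mul (d ^ 2)) hD (fun q hq => ?_)
        have hu : 0 < c ^ 2 * Δ ^ 2 - q.1 ^ 2 - q.2 ^ 2 := by
          have := hq
          rw [hD_def, mem_setOf_eq] at this
          linarith
        have hb := pointwise_bound hc hlam hle q hu
        rw [intervalIntegral.integral_of_le zero_le_one] at hb
        exact hb
    _ = d ^ 2 * ∫ q in D, ∫ s in Ioc (0:ℝ) 1, (prfG c Δ (lam + s * d) q) ^ 2 :=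
        integral_const_mul _ _
    _ = d ^ 2 * ∫ s in Ioc (0:ℝ) 1, ∫ q in D, (prfG c Δ (lam + s * d) q) ^ 2 := by
        rw [hswap]
    _ = d ^ 2 * ∫ s in Ioc (0:ℝ) 1, 1 / 4 * prfFisher Δ (lam + s * d) := by
        congr 1
        refine setIntegral_congr_fun measurableSet_Ioc (fun s hs => ?_)
        exact (fisher_main hc hΔ (hJ s hs)).2
    _ = (lam' - lam) ^ 2 * (1 / 4) * ∫ s in (0:ℝ)..1, prfFisher Δ (lam + s * (lam' - lam)) := by
        rw [intervalIntegral.integral_of_le zero_le_one, integral_const_mul]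
        rw [← hd_def]
        ring
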